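/- arXiv:1701.06628 — 2 statements merged into one kernel-verified Lean document; each statement's English description precedes it below -/
import Mathlib

section
/- For every x ∈ ℝⁿ, R(x) = C ∩ ((x−f) − C), where C := {r ∈ ℝⁿ : (aᵢ − a_k)·r ≤ 0 for all i ∈ I} and k ∈ I is any index attaining ψ(x−f) = a_k·(x−f). -/
theorem stmt_5 {n : ℕ} {I : Type*} [Fintype I] [Nonempty I]
    (a : I → EuclideanSpace ℝ (Fin n)) (f : EuclideanSpace ℝ (Fin n))
    (ψ : EuclideanSpace ℝ (Fin n) → ℝ)
    (hψ : ∀ r, ψ r = Finset.univ.sup' Finset.univ_nonempty (fun i => (inner ℝ (a i) r : ℝ)))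
    (x : EuclideanSpace ℝ (Fin n)) (k : I)
    (hk : ψ (x - f) = (inner ℝ (a k) (x - f) : ℝ))
    (C : Set (EuclideanSpace ℝ (Fin n)))
    (hC : C = {r | ∀ i, (inner ℝ (a i - a k) r : ℝ) ≤ 0}) :
    {r : EuclideanSpace ℝ (Fin n) | ψ r + ψ (x - f - r) = ψ (x - f)} =
      C ∩ {r | x - f - r ∈ C} := by
  ext r
  simp only [Set.mem_setOf_eq, hC, Set.mem_inter_iff]
  have h1 : (inner ℝ (a k) r : ℝ) ≤ ψ r := by
    rw [hψ]; exact Finset.le_sup' (fun j => (inner ℝ (a j) _ : ℝ)) (Finset.mem_univ k)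
  have h2 : (inner ℝ (a k) (x - f - r) : ℝ) ≤ ψ (x - f - r) := by
    rw [hψ]; exact Finset.le_sup' (fun j => (inner ℝ (a j) _ : ℝ)) (Finset.mem_univ k)
  have hadd : (inner ℝ (a k) r : ℝ) + (inner ℝ (a k) (x - f - r) : ℝ)
      = (inner ℝ (a k) (x - f) : ℝ) := by
    rw [inner_sub_right]; ring
  constructor
  · intro h
    have hψr : ψ r = (inner ℝ (a k) r : ℝ) := by linarith [hk ▸ h]
    have hψr2 : ψ (x - f - r) = (inner ℝ (a k) (x - f - r) : ℝ) := by linarith [hk ▸ h]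
    constructor
    · intro i
      have : (inner ℝ (a i) r : ℝ) ≤ ψ r := by
        rw [hψ]; exact Finset.le_sup' (fun j => (inner ℝ (a j) _ : ℝ)) (Finset.mem_univ i)
      rw [inner_sub_left]; linarith [hψr ▸ this]
    · intro i
      have : (inner ℝ (a i) (x - f - r) : ℝ) ≤ ψ (x - f - r) := by
        rw [hψ]; exact Finset.le_sup' (fun j => (inner ℝ (a j) _ : ℝ)) (Finset.mem_univ i)
      rw [inner_sub_left]; linarith [hψr2 ▸ this]
  · rintro ⟨hr, hr2⟩
    have hψr : ψ r = (inner ℝ (a k) r : ℝ) := by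
      refine le_antisymm ?_ h1
      rw [hψ]
      refine Finset.sup'_le _ _ fun i _ => ?_
      have := hr i; rw [inner_sub_left] at this; linarith
    have hψr2 : ψ (x - f - r) = (inner ℝ (a k) (x - f - r) : ℝ) := by
      refine le_antisymm ?_ h2
      rw [hψ]
      refine Finset.sup'_le _ _ fun i _ => ?_
      have := hr2 i; rw [inner_sub_left] at this; linarith
    rw [hψr, hψr2, hadd, hk]
end

section
/- Let x ∈ ℝⁿ and suppose ψ(x−f) = 1 and ψ(r*) + ψ(x−f−r*) = 1 for some r* ∈ ℝⁿ. Then for λ := ψ(r*), the point (x, 1) lies in B(λ, r*), i.e., aᵢ·(x−f) + (ψ(r*) − aᵢ·r*) ≤ 1 for all i ∈ I. Conversely, if (x, 1) ∈ B(ψ(r*), r*) and ψ(x−f) ≥ 1, then ψ(r*) + ψ(x−f−r*) = ψ(x−f) = 1. -/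
theorem stmt_17 {n : ℕ} {I : Type*} [Fintype I] [Nonempty I]
    (a : I → EuclideanSpace ℝ (Fin n)) (f rstar : EuclideanSpace ℝ (Fin n))
    (ψ : EuclideanSpace ℝ (Fin n) → ℝ)
    (hψ : ∀ r, ψ r = Finset.univ.sup' Finset.univ_nonempty (fun i => (inner ℝ (a i) r : ℝ)))
    (x : EuclideanSpace ℝ (Fin n)) :
    ((ψ (x - f) = 1 ∧ ψ rstar + ψ (x - f - rstar) = 1) →
      ∀ i, (inner ℝ (a i) (x - f) : ℝ) + (ψ rstar - (inner ℝ (a i) rstar : ℝ)) ≤ 1) ∧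
    (((∀ i, (inner ℝ (a i) (x - f) : ℝ) + (ψ rstar - (inner ℝ (a i) rstar : ℝ)) ≤ 1) ∧
        1 ≤ ψ (x - f)) →
      ψ rstar + ψ (x - f - rstar) = ψ (x - f) ∧ ψ (x - f) = 1) := by
  have hle : ∀ r (i : I), (inner ℝ (a i) r : ℝ) ≤ ψ r := by
    intro r i
    calc (inner ℝ (a i) r : ℝ) ≤ Finset.univ.sup' Finset.univ_nonempty (fun j : I => (inner ℝ (a j) r : ℝ)) :=
          Finset.le_sup' (fun j : I => (inner ℝ (a j) r : ℝ)) (Finset.mem_univ i)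
      _ = ψ r := (hψ r).symm
  have hsub : ψ (x - f) ≤ ψ rstar + ψ (x - f - rstar) := by
    rw [hψ (x - f)]
    apply Finset.sup'_le
    intro i _
    have : (inner ℝ (a i) (x - f) : ℝ) = inner ℝ (a i) rstar + inner ℝ (a i) (x - f - rstar) := by
      rw [← inner_add_right]; congr 1; abel
    rw [this]
    exact add_le_add (hle _ i) (hle _ i)
  constructor
  · rintro ⟨h1, h2⟩ i
    have h3 : (inner ℝ (a i) (x - f) : ℝ) - inner ℝ (a i) rstar = inner ℝ (a i) (x - f - rstar) := by
      simp [inner_sub_right]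
    have := hle (x - f - rstar) i
    linarith
  · rintro ⟨h1, h2⟩
    have hB : ψ (x - f - rstar) ≤ 1 - ψ rstar := by
      rw [hψ]
      apply Finset.sup'_le
      intro i _
      have h3 : (inner ℝ (a i) (x - f - rstar) : ℝ) = inner ℝ (a i) (x - f) - inner ℝ (a i) rstar := by
        simp [inner_sub_right]
      have := h1 i
      linarith
    constructor <;> linarith
end
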